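/- With r_{p,γ} as defined (r_{p,γ}(0) = 1 + γ/3, and for k ≥ 1 with p^{a-1} ≤ k < p^a and leading digit κ_{a-1}: r_{p,γ}(k) = (γ/(2p^{2a}))(1/sin²(κ_{a-1}π/p) − 1/3)), for every g ∈ ℕ one has ∑_{k=0}^{p^g − 1} r_{p,γ}(k) = 1 + γ/3 + (γ/6)(1 − 1/p^g). -/

import Mathlib

lemma sum_range_cast (n : ℕ) : ∑ m ∈ Finset.range n, (m:ℂ) = n*(n-1)/2 := by
  induction n with
  | zero => simp
  | succ n ih => rw [Finset.sum_range_succ, ih]; push_cast; ring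

lemma sum_range_sq_cast (n : ℕ) : ∑ m ∈ Finset.range n, (m:ℂ)^2 = n*(n-1)*(2*n-1)/6 := by
  induction n with
  | zero => simp
  | succ n ih => rw [Finset.sum_range_succ, ih]; push_cast; ring

lemma key_poly (x : ℂ) (n : ℕ) :
    (x-1) * ∑ m ∈ Finset.range n, (m:ℂ)*x^m
      = ((n:ℂ)-1)*x^n - (∑ m ∈ Finset.range n, x^m) + 1 := by
  induction n with
  | zero => simp
  | succ n ih =>
    rw [Finset.sum_range_succ, Finset.sum_range_succ (f := fun m => x^m)]
    push_cast
    ring_nf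
    ring_nf at ih
    linear_combination ih

lemma inv_one_sub (x : ℂ) (n : ℕ) (hn : n ≠ 0) (hx1 : x ≠ 1) (hxn : x^n = 1) :
    (1 - x)⁻¹ = -(∑ m ∈ Finset.range n, (m:ℂ)*x^m)/n := by
  have hgeom : ∑ m ∈ Finset.range n, x^m = (x^n - 1)/(x - 1) := geom_sum_eq (by exact hx1) n
  have h : (x-1) * ∑ m ∈ Finset.range n, (m:ℂ)*x^m = n := by
    rw [key_poly, hgeom, hxn]; ring
  have hne : (n:ℂ) ≠ 0 := Nat.cast_ne_zero.mpr hn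
  have hx : (1:ℂ) - x ≠ 0 := sub_ne_zero.mpr (Ne.symm hx1)
  field_simp
  linear_combination -h

lemma sum_csc_sq (n : ℕ) (hn : 2 ≤ n) :
    ∑ k ∈ Finset.Ico 1 n, 1 / Real.sin (k * Real.pi / n) ^ 2 = ((n:ℝ)^2 - 1)/3 := by
  have hn0 : (n:ℝ) ≠ 0 := by positivity
  have hnne : n ≠ 0 := by omega
  have hnC : (n:ℂ) ≠ 0 := Nat.cast_ne_zero.mpr hnne
  set ζ := Complex.exp (2 * Real.pi * Complex.I / n) with hζ
  have hprim : IsPrimitiveRoot ζ n := Complex.isPrimitiveRoot_exp n hnne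
  have hsin : ∀ k ∈ Finset.Ico 1 n, ((1 / Real.sin (k * Real.pi / n) ^ 2 : ℝ) : ℂ)
      = 4/(n:ℂ)^2 * ((∑ m ∈ Finset.range n, (m:ℂ)*(ζ^k)^m) *
          (∑ m ∈ Finset.range n, (m:ℂ)*((ζ^k)⁻¹)^m)) := by
    intro k hk
    rw [Finset.mem_Ico] at hk
    set x := ζ^k with hxdef
    set y := x⁻¹ with hydef
    have hx1 : x ≠ 1 := hprim.pow_ne_one_of_pos_of_lt (by omega) hk.2
    have hxn : x^n = 1 := by
      rw [hxdef, ← pow_mul, mul_comm, pow_mul, hprim.pow_eq_one, one_pow]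
    have hy1 : y ≠ 1 := by
      rw [hydef]; simpa [inv_eq_one] using hx1
    have hyn : y^n = 1 := by rw [hydef, inv_pow, hxn, inv_one]
    -- trig identity
    have hsne : Real.sin (k * Real.pi / n) ≠ 0 := by
      have h1 : (0:ℝ) < k * Real.pi / n := by
        have : (0:ℝ) < k := by exact_mod_cast hk.1
        positivity
      have h2 : k * Real.pi / n < Real.pi := by
        rw [div_lt_iff₀ (by positivity)]
        have : (k:ℝ) < n := by exact_mod_cast hk.2
        nlinarith [Real.pi_pos]
      exact ne_of_gt (Real.sin_pos_of_pos_of_lt_pi h1 h2)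
    have htrig : (1-x)*(1-y) = ((4 * Real.sin (k * Real.pi / n) ^ 2 : ℝ) : ℂ) := by
      have hxexp : x = Complex.exp ((2 * Real.pi * k / n : ℝ) * Complex.I) := by
        rw [hxdef, hζ, ← Complex.exp_nat_mul]
        congr 1
        push_cast
        ring
      have hyexp : y = Complex.exp (-((2 * Real.pi * k / n : ℝ) : ℂ) * Complex.I) := by
        rw [hydef, hxexp, ← Complex.exp_neg, neg_mul]
      have hcos : x + y = 2 * Real.cos (2 * Real.pi * k / n) := by
        rw [hxexp, hyexp, ← Complex.two_cos, Complex.ofReal_cos]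
      have hxy : x * y = 1 := by
        rw [hydef, mul_inv_cancel₀ (by rw [hxdef]; exact pow_ne_zero _ (hprim.ne_zero hnne))]
      have hreal : 4 * Real.sin (k * Real.pi / n) ^ 2 = 2 - 2 * Real.cos (2 * Real.pi * k / n) := by
        have h2a : 2 * Real.pi * k / n = 2 * (k * Real.pi / n) := by ring
        rw [h2a, Real.cos_two_mul, Real.cos_sq']
        ring
      rw [hreal]
      push_cast
      push_cast at hcos
      linear_combination hxy - hcos
    have hA : ∑ m ∈ Finset.range n, (m:ℂ)*x^m = -(n:ℂ)*(1-x)⁻¹ := by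
      have := inv_one_sub x n hnne hx1 hxn
      rw [this]
      field_simp
    have hB : ∑ m ∈ Finset.range n, (m:ℂ)*y^m = -(n:ℂ)*(1-y)⁻¹ := by
      have := inv_one_sub y n hnne hy1 hyn
      rw [this]
      field_simp
    rw [hA, hB]
    have h1x : (1:ℂ) - x ≠ 0 := sub_ne_zero.mpr (Ne.symm hx1)
    have h1y : (1:ℂ) - y ≠ 0 := sub_ne_zero.mpr (Ne.symm hy1)
    have hsC : Complex.sin ((k:ℂ) * Real.pi / n) ≠ 0 := by
      have : ((Real.sin (k * Real.pi / n) : ℝ) : ℂ) ≠ 0 := by exact_mod_cast hsne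
      push_cast at this; exact this
    have hmm : (-(n:ℂ)*(1-x)⁻¹) * (-(n:ℂ)*(1-y)⁻¹) = (n:ℂ)^2 * ((1-x)*(1-y))⁻¹ := by
      rw [mul_inv]; ring
    rw [hmm, htrig]
    push_cast
    field_simp
  have hζ0 : ζ ≠ 0 := hprim.ne_zero hnne
  have key : (∑ k ∈ Finset.Ico 1 n, ((1 / Real.sin (k * Real.pi / n) ^ 2 : ℝ) : ℂ)) = ((n:ℂ)^2-1)/3 := by
    rw [Finset.sum_congr rfl hsin, ← Finset.mul_sum]
    have step1 : ∑ k ∈ Finset.Ico 1 n,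
        ((∑ m ∈ Finset.range n, (m:ℂ)*(ζ^k)^m) * (∑ m ∈ Finset.range n, (m:ℂ)*((ζ^k)⁻¹)^m))
        = ∑ m ∈ Finset.range n, ∑ m' ∈ Finset.range n,
            (m:ℂ) * (m':ℂ) * ((if m = m' then (n:ℂ) else 0) - 1) := by
      have e : ∀ k ∈ Finset.Ico 1 n,
          (∑ m ∈ Finset.range n, (m:ℂ)*(ζ^k)^m) * (∑ m ∈ Finset.range n, (m:ℂ)*((ζ^k)⁻¹)^m)
          = ∑ m ∈ Finset.range n, ∑ m' ∈ Finset.range n, (m:ℂ)*(m':ℂ) * (ζ^m * (ζ^m')⁻¹)^k := by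
        intro k _
        rw [Finset.sum_mul_sum]
        refine Finset.sum_congr rfl fun m _ => Finset.sum_congr rfl fun m' _ => ?_
        have e1 : (ζ^k)^m = (ζ^m)^k := by rw [← pow_mul, ← pow_mul, mul_comm]
        have e2 : ((ζ^k)⁻¹)^m' = ((ζ^m')⁻¹)^k := by
          rw [← inv_pow, ← inv_pow, ← pow_mul, ← pow_mul, mul_comm]
        rw [e1, e2, mul_pow]; ring
      rw [Finset.sum_congr rfl e, Finset.sum_comm]
      refine Finset.sum_congr rfl fun m hm => ?_
      rw [Finset.sum_comm]
      refine Finset.sum_congr rfl fun m' hm' => ?_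
      rw [← Finset.mul_sum]
      congr 1
      set u := ζ^m * (ζ^m')⁻¹ with hu
      have hIco : ∑ k ∈ Finset.Ico 1 n, u^k = (∑ k ∈ Finset.range n, u^k) - 1 := by
        rw [Finset.range_eq_Ico, ← Finset.sum_Ico_consecutive _ (Nat.zero_le 1) (by omega : 1 ≤ n)]
        simp
      by_cases h : m = m'
      · subst h
        have hu1 : u = 1 := mul_inv_cancel₀ (pow_ne_zero _ hζ0)
        rw [hIco, hu1]
        have : 1 ≤ n := by omega
        simp [Nat.cast_sub this]
      · have hu1 : u ≠ 1 := by
          intro hcon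
          exact h (hprim.pow_inj (Finset.mem_range.mp hm) (Finset.mem_range.mp hm')
            ((mul_inv_eq_one₀ (pow_ne_zero _ hζ0)).mp hcon))
        have hun : u^n = 1 := by
          have h1 : (ζ^m)^n = 1 := by rw [← pow_mul, mul_comm, pow_mul, hprim.pow_eq_one, one_pow]
          have h2 : (ζ^m')^n = 1 := by rw [← pow_mul, mul_comm, pow_mul, hprim.pow_eq_one, one_pow]
          rw [hu, mul_pow, h1, inv_pow, h2, inv_one, mul_one]
        rw [hIco, geom_sum_eq hu1, hun]
        simp [h]
    rw [step1]
    have step2 : ∀ m ∈ Finset.range n, ∑ m' ∈ Finset.range n,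
        (m:ℂ) * (m':ℂ) * ((if m = m' then (n:ℂ) else 0) - 1)
        = (n:ℂ) * (m:ℂ)^2 - (m:ℂ) * ∑ m' ∈ Finset.range n, (m':ℂ) := by
      intro m hm
      have e : ∀ m' ∈ Finset.range n, (m:ℂ) * (m':ℂ) * ((if m = m' then (n:ℂ) else 0) - 1)
          = (if m = m' then (m:ℂ)*(m':ℂ)*(n:ℂ) else 0) - (m:ℂ)*(m':ℂ) := by
        intro m' _
        split_ifs with h <;> ring
      rw [Finset.sum_congr rfl e, Finset.sum_sub_distrib, Finset.sum_ite_eq, if_pos hm,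
        ← Finset.mul_sum]
      ring
    rw [Finset.sum_congr rfl step2, Finset.sum_sub_distrib, ← Finset.mul_sum, ← Finset.sum_mul,
      sum_range_cast, sum_range_sq_cast]
    field_simp
    ring
  apply Complex.ofReal_injective
  push_cast
  push_cast at key
  exact key

/-- The coefficients of the `p`-adic shift invariant kernel of the anchored
Sobolev space: `r p γ 0 = 1 + γ/3` and for `k ≥ 1` with `a` base-`p` digits and
most significant digit `κ`, `r p γ k = γ/(2 p^(2a)) (1/sin²(κπ/p) - 1/3)`. -/
noncomputable def rCoeff (p : ℕ) (γ : ℝ) (k : ℕ) : ℝ :=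
  if k = 0 then 1 + γ / 3
  else
    γ / (2 * (p : ℝ) ^ (2 * (Nat.log p k + 1))) *
      (1 / (Real.sin ((k / p ^ Nat.log p k : ℕ) * Real.pi / p)) ^ 2 - 1 / 3)

lemma rCoeff_Ico (p : ℕ) (hp : p.Prime) (γ : ℝ) (g : ℕ) :
    ∑ k ∈ Finset.Ico (p^g) (p^(g+1)), rCoeff p γ k
      = γ/6 * (((p:ℝ)-1)/(p:ℝ)^(g+1)) := by
  have hp1 : 1 ≤ p := hp.one_le
  have hpg : 0 < p^g := pow_pos hp.pos g
  have hpR : (0:ℝ) < p := by exact_mod_cast hp.pos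
  have hbij : ∑ k ∈ Finset.Ico (p^g) (p^(g+1)), rCoeff p γ k
      = ∑ x ∈ (Finset.Ico 1 p) ×ˢ Finset.range (p^g),
          γ / (2 * (p:ℝ)^(2*(g+1))) * (1 / Real.sin ((x.1:ℝ) * Real.pi / p)^2 - 1/3) := by
    refine Finset.sum_nbij' (fun k => (k / p^g, k % p^g)) (fun x => x.1 * p^g + x.2)
      ?_ ?_ ?_ ?_ ?_
    · intro k hk
      rw [Finset.mem_Ico] at hk
      rw [Finset.mem_product, Finset.mem_Ico, Finset.mem_range]
      refine ⟨⟨?_, ?_⟩, Nat.mod_lt _ hpg⟩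
      · exact (Nat.one_le_div_iff hpg).mpr hk.1
      · rw [Nat.div_lt_iff_lt_mul hpg]
        calc k < p^(g+1) := hk.2
        _ = p * p^g := by ring
    · intro x hx
      rw [Finset.mem_product, Finset.mem_Ico, Finset.mem_range] at hx
      rw [Finset.mem_Ico]
      constructor
      · exact le_add_right (Nat.le_mul_of_pos_left _ hx.1.1)
      · calc x.1 * p^g + x.2 < x.1 * p^g + p^g := by omega
        _ = (x.1+1) * p^g := by ring
        _ ≤ p * p^g := Nat.mul_le_mul_right _ (by omega)
        _ = p^(g+1) := by ring
    · intro k _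
      simp only
      rw [mul_comm, Nat.div_add_mod]
    · intro x hx
      rw [Finset.mem_product, Finset.mem_Ico, Finset.mem_range] at hx
      have hdiv : (x.1 * p^g + x.2) / p^g = x.1 := by
        rw [mul_comm, Nat.mul_add_div hpg, Nat.div_eq_of_lt hx.2, add_zero]
      have hmod : (x.1 * p^g + x.2) % p^g = x.2 := by
        rw [mul_comm, Nat.mul_add_mod, Nat.mod_eq_of_lt hx.2]
      simp only [hdiv, hmod]
    · intro k hk
      rw [Finset.mem_Ico] at hk
      have hne : k ≠ 0 := by omega
      have hlog : Nat.log p k = g := Nat.log_eq_of_pow_le_of_lt_pow hk.1 hk.2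
      rw [rCoeff, if_neg hne, hlog]
  rw [hbij, Finset.sum_product]
  simp only [Finset.sum_const, Finset.card_range, nsmul_eq_mul]
  have hsum : ∑ κ ∈ Finset.Ico 1 p, (1 / Real.sin ((κ:ℝ) * Real.pi / p)^2 - 1/3 : ℝ)
      = ((p:ℝ)^2 - 1)/3 - ((p:ℝ)-1)/3 := by
    rw [Finset.sum_sub_distrib, sum_csc_sq p hp.two_le, Finset.sum_const, Nat.card_Ico,
      nsmul_eq_mul, Nat.cast_sub hp1]
    push_cast
    ring
  rw [← Finset.mul_sum, ← Finset.mul_sum, hsum]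
  have hpne : (p:ℝ) ≠ 0 := ne_of_gt hpR
  push_cast
  field_simp
  ring

theorem sum_rCoeff_below_pg (p : ℕ) (hp : p.Prime) (γ : ℝ) (hγ : 0 < γ) (g : ℕ) :
    ∑ k ∈ Finset.range (p ^ g), rCoeff p γ k
      = 1 + γ / 3 + γ / 6 * (1 - 1 / (p : ℝ) ^ g) := by
  have hpR : (0:ℝ) < p := by exact_mod_cast hp.pos
  have hpne : (p:ℝ) ≠ 0 := ne_of_gt hpR
  induction g with
  | zero => simp [rCoeff]
  | succ g ih =>
    have hsplit : ∑ k ∈ Finset.range (p^(g+1)), rCoeff p γ k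
        = ∑ k ∈ Finset.range (p^g), rCoeff p γ k
          + ∑ k ∈ Finset.Ico (p^g) (p^(g+1)), rCoeff p γ k := by
      rw [Finset.range_eq_Ico, Finset.range_eq_Ico]
      exact (Finset.sum_Ico_consecutive (fun k => rCoeff p γ k) (Nat.zero_le _)
          (Nat.pow_le_pow_right hp.pos (Nat.le_succ g))).symm
    rw [hsplit, ih, rCoeff_Ico p hp γ g]
    have h1 : (p:ℝ)^g ≠ 0 := by positivity
    have h2 : (p:ℝ)^(g+1) ≠ 0 := by positivity
    field_simp
    ring
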